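/- The set of pairs (A,B) of complex n×n matrices that share a common eigenvector is a Zariski-closed proper subset of (ℂ^{n×n})², for n ≥ 2; in particular it has empty interior in the Euclidean topology. -/

import Mathlib

open Matrix Polynomial

namespace CEP

noncomputable section

variable {n : ℕ}

abbrev E (n : ℕ) := Module.End ℂ (Fin n → ℂ)

lemma chpow (hn : 0 < n) (f : E n) :
    ∃ c : ℕ → ℂ, f ^ n = ∑ k ∈ Finset.range n, c k • f ^ k := by
  set p := LinearMap.charpoly f with hp
  have hdeg : p.natDegree = n := by
    rw [hp, LinearMap.charpoly_natDegree]; simp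
  have hmonic : p.Monic := LinearMap.charpoly_monic f
  have h0 : Polynomial.aeval f p = 0 := LinearMap.aeval_self_charpoly f
  set r := Polynomial.X ^ n - p with hr
  have hrd : r.natDegree < n := by
    rcases eq_or_ne r 0 with h | h
    · simpa [h] using hn
    · rw [Polynomial.natDegree_lt_iff_degree_lt h]
      have hd : (Polynomial.X ^ n - p).degree < ((Polynomial.X:ℂ[X]) ^ n).degree := by
        apply Polynomial.degree_sub_lt
        · rw [Polynomial.degree_X_pow, Polynomial.degree_eq_natDegree hmonic.ne_zero, hdeg]
        · exact pow_ne_zero _ Polynomial.X_ne_zero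
        · simp [Polynomial.leadingCoeff_X_pow, hmonic.leadingCoeff]
      rw [Polynomial.degree_X_pow] at hd
      exact hd
  refine ⟨fun k => r.coeff k, ?_⟩
  have : Polynomial.aeval f r = f ^ n := by
    rw [hr, map_sub, h0, sub_zero, Polynomial.aeval_X_pow]
  rw [← this, Polynomial.aeval_eq_sum_range' hrd]

def Kspace (a b : E n) : Submodule ℂ (Fin n → ℂ) :=
  ⨅ ij : Fin n × Fin n,
    LinearMap.ker (a ^ (ij.1 : ℕ) * b ^ (ij.2 : ℕ) - b ^ (ij.2 : ℕ) * a ^ (ij.1 : ℕ))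

lemma mem_Kspace_iff {a b : E n} {v : Fin n → ℂ} :
    v ∈ Kspace a b ↔ ∀ i j : ℕ, i < n → j < n →
      (a ^ i) ((b ^ j) v) = (b ^ j) ((a ^ i) v) := by
  simp only [Kspace, Submodule.mem_iInf, LinearMap.mem_ker, LinearMap.sub_apply,
    Module.End.mul_apply, sub_eq_zero]
  constructor
  · intro h i j hi hj; exact h (⟨i, hi⟩, ⟨j, hj⟩)
  · intro h ij; exact h ij.1 ij.2 ij.1.isLt ij.2.isLt

lemma Kspace_invariant (hn : 2 ≤ n) (a b : E n) :
    (∀ v ∈ Kspace a b, a v ∈ Kspace a b) ∧ (∀ v ∈ Kspace a b, b v ∈ Kspace a b) := by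
  have hn0 : 0 < n := by omega
  have h1 : 1 < n := by omega
  obtain ⟨ca, hca⟩ := chpow hn0 a
  obtain ⟨cb, hcb⟩ := chpow hn0 b
  -- extension to exponent n
  have extb : ∀ v ∈ Kspace a b, ∀ i : ℕ, i < n →
      (a ^ i) ((b ^ n) v) = (b ^ n) ((a ^ i) v) := by
    intro v hv i hi
    rw [hcb]
    simp only [LinearMap.sum_apply, LinearMap.smul_apply, map_sum, LinearMap.map_smul]
    refine Finset.sum_congr rfl fun k hk => ?_
    rw [mem_Kspace_iff.mp hv i k hi (Finset.mem_range.mp hk)]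
  have exta : ∀ v ∈ Kspace a b, ∀ j : ℕ, j < n →
      (a ^ n) ((b ^ j) v) = (b ^ j) ((a ^ n) v) := by
    intro v hv j hj
    rw [hca]
    simp only [LinearMap.sum_apply, LinearMap.smul_apply, map_sum, LinearMap.map_smul]
    refine Finset.sum_congr rfl fun k hk => ?_
    rw [mem_Kspace_iff.mp hv k j (Finset.mem_range.mp hk) hj]
  constructor
  · intro v hv
    rw [mem_Kspace_iff]
    intro i j hi hj
    have hbj : (b ^ j) (a v) = a ((b ^ j) v) := by
      have := mem_Kspace_iff.mp hv 1 j h1 hj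
      simpa [pow_one] using this.symm
    rw [hbj]
    have h2 : (a ^ i) (a ((b ^ j) v)) = (a ^ (i+1)) ((b ^ j) v) := by
      rw [pow_succ]; rfl
    rw [h2]
    have h3 : (a ^ (i+1)) ((b ^ j) v) = (b ^ j) ((a ^ (i+1)) v) := by
      rcases lt_or_eq_of_le (Nat.succ_le_of_lt hi) with h | h
      · exact mem_Kspace_iff.mp hv (i+1) j h hj
      · rw [show i + 1 = n from h]; exact exta v hv j hj
    rw [h3, pow_succ]
    rfl
  · intro v hv
    rw [mem_Kspace_iff]
    intro i j hi hj
    have h2 : (a ^ i) ((b ^ j) (b v)) = (a ^ i) ((b ^ (j+1)) v) := by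
      rw [pow_succ]; rfl
    rw [h2]
    have h3 : (a ^ i) ((b ^ (j+1)) v) = (b ^ (j+1)) ((a ^ i) v) := by
      rcases lt_or_eq_of_le (Nat.succ_le_of_lt hj) with h | h
      · exact mem_Kspace_iff.mp hv i (j+1) hi h
      · rw [show j + 1 = n from h]; exact extb v hv i hi
    rw [h3]
    have hbi : b ((a ^ i) v) = (a ^ i) (b v) := by
      have := mem_Kspace_iff.mp hv i 1 hi h1
      simpa [pow_one] using this.symm
    rw [← hbi, pow_succ]
    rfl

lemma shemesh (hn : 2 ≤ n) (a b : E n) (hK : Kspace a b ≠ ⊥) :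
    ∃ v : Fin n → ℂ, v ≠ 0 ∧ (∃ lam : ℂ, a v = lam • v) ∧ (∃ mu : ℂ, b v = mu • v) := by
  obtain ⟨haK, hbK⟩ := Kspace_invariant hn a b
  haveI : Nontrivial (Kspace a b) := Submodule.nontrivial_iff_ne_bot.mpr hK
  set aK : Kspace a b →ₗ[ℂ] Kspace a b := a.restrict haK with haKdef
  obtain ⟨lam, hlam⟩ := Module.End.exists_eigenvalue aK
  obtain ⟨w, hw⟩ := hlam.exists_hasEigenvector
  have hwa : a (w : Fin n → ℂ) = lam • (w : Fin n → ℂ) := by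
    have := hw.apply_eq_smul
    have h2 : ((aK w : Kspace a b) : Fin n → ℂ) = a (w : Fin n → ℂ) := rfl
    rw [this] at h2
    simpa using h2.symm
  set W : Submodule ℂ (Fin n → ℂ) := Kspace a b ⊓ LinearMap.ker (a - lam • (1 : E n)) with hWdef
  have hmemW : ∀ u : Fin n → ℂ, u ∈ W ↔ u ∈ Kspace a b ∧ a u = lam • u := by
    intro u
    simp only [hWdef, Submodule.mem_inf, LinearMap.mem_ker, LinearMap.sub_apply,
      LinearMap.smul_apply, Module.End.one_apply, sub_eq_zero]
  have hwW : (w : Fin n → ℂ) ∈ W := (hmemW _).mpr ⟨w.2, hwa⟩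
  haveI : Nontrivial W := by
    apply Submodule.nontrivial_iff_ne_bot.mpr
    intro h
    have : (w : Fin n → ℂ) = 0 := by
      have := h ▸ hwW
      simpa using this
    exact hw.right (by simpa using this)
  have hbW : ∀ u ∈ W, b u ∈ W := by
    intro u hu
    obtain ⟨huK, hua⟩ := (hmemW u).mp hu
    refine (hmemW _).mpr ⟨hbK u huK, ?_⟩
    have hcomm : a (b u) = b (a u) := by
      have := mem_Kspace_iff.mp huK 1 1 (by omega) (by omega)
      simpa [pow_one] using this
    rw [hcomm, hua, LinearMap.map_smul]
  set bW : W →ₗ[ℂ] W := b.restrict hbW with hbWdef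
  obtain ⟨mu, hmu⟩ := Module.End.exists_eigenvalue bW
  obtain ⟨u, hu⟩ := hmu.exists_hasEigenvector
  have hub : b (u : Fin n → ℂ) = mu • (u : Fin n → ℂ) := by
    have := hu.apply_eq_smul
    have h2 : ((bW u : W) : Fin n → ℂ) = b (u : Fin n → ℂ) := rfl
    rw [this] at h2
    simpa using h2.symm
  obtain ⟨-, hua⟩ := (hmemW _).mp u.2
  exact ⟨u, by simpa using hu.right ∘ Subtype.val_injective.eq_iff.mp ∘ (by simpa using ·),
    ⟨lam, hua⟩, ⟨mu, hub⟩⟩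

lemma rows_lemma {R : Type} [Fintype R] (M : Matrix R (Fin n) ℂ)
    (h : ∀ s : Fin n → R, (M.submatrix s id).det = 0) :
    ∃ v : Fin n → ℂ, v ≠ 0 ∧ M *ᵥ v = 0 := by
  classical
  set S : Submodule ℂ (Fin n → ℂ) := Submodule.span ℂ (Set.range fun r => M r) with hSdef
  by_cases hS : S = ⊤
  · exfalso
    obtain ⟨t, hts, htspan, htli⟩ := exists_linearIndependent ℂ (Set.range fun r => M r)
    have htop : Submodule.span ℂ t = ⊤ := by rw [htspan]; exact hS
    let bT : Module.Basis t ℂ (Fin n → ℂ) := Module.Basis.mk htli (by rw [Subtype.range_coe]; exact htop.ge)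
    let e : Fin n ≃ t := (Pi.basisFun ℂ (Fin n)).indexEquiv bT
    have hchoice : ∀ x : t, ∃ r : R, M r = (x : Fin n → ℂ) := fun x => hts x.2
    choose g hg using hchoice
    set s : Fin n → R := fun k => g (e k) with hsdef
    obtain ⟨w, hw0, hw⟩ := Matrix.exists_vecMul_eq_zero_iff.mpr (h s)
    have hrows : ∀ k, (M.submatrix s id) k = bT (e k) := by
      intro k; funext c
      simp only [Matrix.submatrix_apply, id_eq, hsdef, bT, Module.Basis.mk_apply]
      rw [hg (e k)]
    have hli : LinearIndependent ℂ (fun k => (M.submatrix s id) k) := by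
      rw [show (fun k => (M.submatrix s id) k) = (fun k => bT (e k)) from funext hrows]
      exact bT.linearIndependent.comp e e.injective
    apply hw0
    have hsum : ∑ k, w k • (M.submatrix s id) k = 0 := by
      funext c
      have := congrFun hw c
      simpa [Matrix.vecMul, dotProduct, Finset.sum_apply] using this
    have := Fintype.linearIndependent_iff.mp hli w hsum
    funext k; exact this k
  · have hlt : S < ⊤ := lt_top_iff_ne_top.mpr hS
    obtain ⟨f, hf0, hfbot⟩ := Submodule.exists_dual_map_eq_bot_of_lt_top hlt inferInstance
    have hfv : ∀ u : Fin n → ℂ, f u = ∑ k, u k * f (Pi.single k 1) := by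
      intro u
      conv_lhs => rw [show u = ∑ k, Pi.single k (u k) from (Finset.univ_sum_single u).symm]
      rw [map_sum]
      refine Finset.sum_congr rfl fun k _ => ?_
      have h1 : (Pi.single k (u k) : Fin n → ℂ) = u k • (Pi.single k 1 : Fin n → ℂ) := by
        funext j; simp [Pi.single_apply, mul_comm]
      rw [h1, LinearMap.map_smul]; rfl
    refine ⟨fun k => f (Pi.single k 1), ?_, ?_⟩
    · intro hv
      apply hf0
      refine LinearMap.ext fun u => ?_
      rw [hfv u]
      simp only [LinearMap.zero_apply]
      refine Finset.sum_eq_zero fun k _ => ?_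
      rw [congrFun hv k]; simp
    · funext r
      have hmem : M r ∈ S := Submodule.subset_span ⟨r, rfl⟩
      have : f (M r) = 0 := by
        have : f (M r) ∈ S.map f := Submodule.mem_map_of_mem hmem
        rwa [hfbot, Submodule.mem_bot] at this
      simp only [Pi.zero_apply]
      rw [← this, hfv (M r)]
      rfl

def bigM (A B : Matrix (Fin n) (Fin n) ℂ) : Matrix ((Fin n × Fin n) × Fin n) (Fin n) ℂ :=
  Matrix.of fun r c =>
    (A ^ (r.1.1 : ℕ) * B ^ (r.1.2 : ℕ) - B ^ (r.1.2 : ℕ) * A ^ (r.1.1 : ℕ)) r.2 c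

lemma mulVecLin_pow (A : Matrix (Fin n) (Fin n) ℂ) (i : ℕ) :
    (A ^ i).mulVecLin = (A.mulVecLin) ^ i := by
  induction i with
  | zero => rw [pow_zero, pow_zero, Matrix.mulVecLin_one]; rfl
  | succ i ih => rw [pow_succ, pow_succ, Matrix.mulVecLin_mul, ih]; rfl

lemma key_iff (hn : 2 ≤ n) (A B : Matrix (Fin n) (Fin n) ℂ) :
    (∃ v : Fin n → ℂ, v ≠ 0 ∧ (∃ lam : ℂ, A *ᵥ v = lam • v) ∧ (∃ mu : ℂ, B *ᵥ v = mu • v)) ↔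
    ∀ s : Fin n → ((Fin n × Fin n) × Fin n), ((bigM A B).submatrix s id).det = 0 := by
  constructor
  · rintro ⟨v, hv, ⟨lam, hA⟩, ⟨mu, hB⟩⟩ s
    have hpow : ∀ (C : Matrix (Fin n) (Fin n) ℂ) (c : ℂ), C *ᵥ v = c • v →
        ∀ i : ℕ, (C ^ i) *ᵥ v = (c ^ i) • v := by
      intro C c hC i
      induction i with
      | zero => simp [Matrix.one_mulVec]
      | succ i ih =>
        rw [pow_succ, ← Matrix.mulVec_mulVec, hC, Matrix.mulVec_smul, ih, smul_smul, pow_succ]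
        ring_nf
    have hM : bigM A B *ᵥ v = 0 := by
      funext r
      have h1 : (A ^ (r.1.1 : ℕ) * B ^ (r.1.2 : ℕ)) *ᵥ v
          = (lam ^ (r.1.1 : ℕ) * mu ^ (r.1.2 : ℕ)) • v := by
        rw [← Matrix.mulVec_mulVec, hpow B mu hB, Matrix.mulVec_smul, hpow A lam hA,
          smul_smul, mul_comm]
      have h2 : (B ^ (r.1.2 : ℕ) * A ^ (r.1.1 : ℕ)) *ᵥ v
          = (lam ^ (r.1.1 : ℕ) * mu ^ (r.1.2 : ℕ)) • v := by
        rw [← Matrix.mulVec_mulVec, hpow A lam hA, Matrix.mulVec_smul, hpow B mu hB,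
          smul_smul, mul_comm]
      have key : ((A ^ (r.1.1:ℕ) * B ^ (r.1.2:ℕ) - B ^ (r.1.2:ℕ) * A ^ (r.1.1:ℕ)) *ᵥ v) = 0 := by
        rw [Matrix.sub_mulVec, h1, h2, sub_self]
      exact congrFun key r.2
    apply Matrix.exists_mulVec_eq_zero_iff.mp
    refine ⟨v, hv, ?_⟩
    funext k
    exact congrFun hM (s k)
  · intro h
    obtain ⟨v, hv, hM⟩ := rows_lemma (bigM A B) h
    have hvK : v ∈ Kspace A.mulVecLin B.mulVecLin := by
      rw [mem_Kspace_iff]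
      intro i j hi hj
      have := fun k => congrFun hM ((⟨i, hi⟩, ⟨j, hj⟩), k)
      have heq : (A ^ i * B ^ j) *ᵥ v = (B ^ j * A ^ i) *ᵥ v := by
        funext k
        have h0 : ((A ^ i * B ^ j - B ^ j * A ^ i) *ᵥ v) k = 0 := this k
        rw [Matrix.sub_mulVec] at h0
        exact sub_eq_zero.mp (by simpa using h0)
      calc (A.mulVecLin ^ i) ((B.mulVecLin ^ j) v)
          = (A ^ i) *ᵥ ((B ^ j) *ᵥ v) := by
            rw [← mulVecLin_pow, ← mulVecLin_pow]; rfl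
        _ = (B ^ j) *ᵥ ((A ^ i) *ᵥ v) := by
            rw [Matrix.mulVec_mulVec, Matrix.mulVec_mulVec, heq]
        _ = (B.mulVecLin ^ j) ((A.mulVecLin ^ i) v) := by
            rw [← mulVecLin_pow, ← mulVecLin_pow]; rfl
    have hKne : Kspace A.mulVecLin B.mulVecLin ≠ ⊥ := by
      intro hbot
      rw [hbot, Submodule.mem_bot] at hvK
      exact hv hvK
    obtain ⟨w, hw, ⟨lam, hla⟩, ⟨mu, hmu⟩⟩ := shemesh hn A.mulVecLin B.mulVecLin hKne
    exact ⟨w, hw, ⟨lam, by rwa [Matrix.mulVecLin_apply] at hla⟩,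
      ⟨mu, by rwa [Matrix.mulVecLin_apply] at hmu⟩⟩

abbrev Idx (n : ℕ) := (Fin n × Fin n) ⊕ (Fin n × Fin n)

def PA (n : ℕ) : Matrix (Fin n) (Fin n) (MvPolynomial (Idx n) ℂ) :=
  Matrix.of fun k l => MvPolynomial.X (Sum.inl (k, l))

def PB (n : ℕ) : Matrix (Fin n) (Fin n) (MvPolynomial (Idx n) ℂ) :=
  Matrix.of fun k l => MvPolynomial.X (Sum.inr (k, l))

def polyM (n : ℕ) : Matrix ((Fin n × Fin n) × Fin n) (Fin n) (MvPolynomial (Idx n) ℂ) :=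
  Matrix.of fun r c =>
    (PA n ^ (r.1.1 : ℕ) * PB n ^ (r.1.2 : ℕ) - PB n ^ (r.1.2 : ℕ) * PA n ^ (r.1.1 : ℕ)) r.2 c

def polyF (n : ℕ) (s : Fin n → ((Fin n × Fin n) × Fin n)) : MvPolynomial (Idx n) ℂ :=
  ((polyM n).submatrix s id).det

lemma eval_polyF (A B : Matrix (Fin n) (Fin n) ℂ) (s : Fin n → ((Fin n × Fin n) × Fin n)) :
    MvPolynomial.eval
        (Sum.elim (fun ij : Fin n × Fin n => A ij.1 ij.2) (fun ij : Fin n × Fin n => B ij.1 ij.2))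
        (polyF n s)
      = ((bigM A B).submatrix s id).det := by
  set φ : MvPolynomial (Idx n) ℂ →+* ℂ := (MvPolynomial.eval
    (Sum.elim (fun ij : Fin n × Fin n => A ij.1 ij.2)
      (fun ij : Fin n × Fin n => B ij.1 ij.2))) with hφ
  have hPA : (RingHom.mapMatrix φ) (PA n) = A := by
    funext k l
    show φ (PA n k l) = A k l
    simp [PA, hφ]
  have hPB : (RingHom.mapMatrix φ) (PB n) = B := by
    funext k l
    show φ (PB n k l) = B k l
    simp [PB, hφ]
  have hC : ∀ i j : ℕ, (RingHom.mapMatrix φ)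
      (PA n ^ i * PB n ^ j - PB n ^ j * PA n ^ i) = A ^ i * B ^ j - B ^ j * A ^ i := by
    intro i j
    rw [map_sub, RingHom.map_mul, RingHom.map_mul, map_pow, map_pow, hPA, hPB]
  rw [polyF, RingHom.map_det]
  congr 1
  funext r c
  show φ (polyM n (s r) c) = bigM A B (s r) c
  have h1 : φ (polyM n (s r) c)
      = ((RingHom.mapMatrix φ) (PA n ^ ((s r).1.1 : ℕ) * PB n ^ ((s r).1.2 : ℕ)
          - PB n ^ ((s r).1.2 : ℕ) * PA n ^ ((s r).1.1 : ℕ))) (s r).2 c := rfl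
  rw [h1, hC]
  rfl

def J (n : ℕ) : Matrix (Fin n) (Fin n) ℂ :=
  Matrix.of fun k l => if (k : ℕ) + 1 = (l : ℕ) then 1 else 0

lemma no_common (hn : 2 ≤ n) :
    ¬ ∃ v : Fin n → ℂ, v ≠ 0 ∧ (∃ lam : ℂ, J n *ᵥ v = lam • v) ∧
      (∃ mu : ℂ, (J n)ᵀ *ᵥ v = mu • v) := by
  rintro ⟨v, hv, ⟨lam, hA⟩, ⟨mu, hB⟩⟩
  have hJ : ∀ k : Fin n, (J n *ᵥ v) k
      = if h : (k : ℕ) + 1 < n then v ⟨(k : ℕ) + 1, h⟩ else 0 := by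
    intro k
    show (∑ l : Fin n, (if (k : ℕ) + 1 = (l : ℕ) then (1:ℂ) else 0) * v l) = _
    by_cases h : (k : ℕ) + 1 < n
    · rw [dif_pos h]
      rw [show (∑ l : Fin n, (if (k : ℕ) + 1 = (l : ℕ) then (1:ℂ) else 0) * v l)
          = ∑ l : Fin n, (if l = (⟨(k:ℕ)+1, h⟩ : Fin n) then v l else 0) from
        Finset.sum_congr rfl fun l _ => by
          by_cases hl : l = (⟨(k:ℕ)+1, h⟩ : Fin n)
          · simp [hl]
          · rw [if_neg hl, if_neg (fun hc => hl (Fin.ext hc.symm)), zero_mul]]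
      rw [Finset.sum_ite_eq' Finset.univ]
      simp
    · rw [dif_neg h]
      refine Finset.sum_eq_zero fun l _ => ?_
      rw [if_neg, zero_mul]
      intro hc
      exact h (hc ▸ l.isLt)
  have key : ∀ k : Fin n, (if h : (k : ℕ) + 1 < n then v ⟨(k : ℕ) + 1, h⟩ else 0)
      = lam * v k := by
    intro k
    rw [← hJ k, hA]
    simp
  by_cases hlam : lam = 0
  · have hzero : ∀ l : Fin n, (l : ℕ) ≠ 0 → v l = 0 := by
      intro l hl
      have hk : (l : ℕ) - 1 + 1 < n := by omega
      have := key ⟨(l : ℕ) - 1, by omega⟩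
      rw [dif_pos hk, hlam, zero_mul] at this
      have hEq : (⟨(l:ℕ) - 1 + 1, hk⟩ : Fin n) = l := Fin.ext (by simp only [Fin.val_mk]; omega)
      rwa [hEq] at this
    have h0 : v ⟨0, by omega⟩ ≠ 0 := by
      intro h0
      apply hv
      funext k
      by_cases hk : (k : ℕ) = 0
      · rwa [show k = (⟨0, by omega⟩ : Fin n) from Fin.ext hk]
      · exact hzero k hk
    have h1 : ((J n)ᵀ *ᵥ v) ⟨1, by omega⟩ = v ⟨0, by omega⟩ := by
      show (∑ l : Fin n, (J n) l ⟨1, by omega⟩ * v l) = _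
      rw [show (∑ l : Fin n, (J n) l ⟨1, by omega⟩ * v l)
          = ∑ l : Fin n, (if l = (⟨0, by omega⟩ : Fin n) then v l else 0) from
        Finset.sum_congr rfl fun l _ => by
          by_cases hl : l = (⟨0, by omega⟩ : Fin n)
          · subst hl
            simp [J]
          · have : ¬ ((l : ℕ) + 1 = 1) := fun hc => hl (Fin.ext (by simp only [Fin.val_mk]; omega))
            simp only [J, Matrix.of_apply]
            rw [if_neg this, zero_mul, if_neg hl]]
      rw [Finset.sum_ite_eq' Finset.univ]
      simp
    have h2 := congrFun hB ⟨1, by omega⟩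
    rw [h1] at h2
    simp only [Pi.smul_apply, smul_eq_mul] at h2
    rw [hzero ⟨1, by omega⟩ (by simp)] at h2
    rw [mul_zero] at h2
    exact h0 h2
  · have claim : ∀ m : ℕ, ∀ k : Fin n, n ≤ (k : ℕ) + 1 + m → v k = 0 := by
      intro m
      induction m with
      | zero =>
        intro k hk
        have := key k
        rw [dif_neg (by omega)] at this
        exact (mul_eq_zero.mp this.symm).resolve_left hlam
      | succ m ih =>
        intro k hk
        by_cases h : (k : ℕ) + 1 < n
        · have := key k
          rw [dif_pos h] at this
          have hnext : v ⟨(k : ℕ) + 1, h⟩ = 0 := ih ⟨(k : ℕ) + 1, h⟩ (by simp; omega)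
          rw [hnext] at this
          exact (mul_eq_zero.mp this.symm).resolve_left hlam
        · have := key k
          rw [dif_neg h] at this
          exact (mul_eq_zero.mp this.symm).resolve_left hlam
    apply hv
    funext k
    exact claim n k (by omega)

lemma interior_empty_of_poly
    (W : Set (Matrix (Fin n) (Fin n) ℂ × Matrix (Fin n) (Fin n) ℂ))
    (P : MvPolynomial (Idx n) ℂ)
    (hWP : ∀ p ∈ W, MvPolynomial.eval
      (Sum.elim (fun ij : Fin n × Fin n => p.1 ij.1 ij.2)
        (fun ij : Fin n × Fin n => p.2 ij.1 ij.2)) P = 0)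
    (p₀ : Matrix (Fin n) (Fin n) ℂ × Matrix (Fin n) (Fin n) ℂ)
    (hp₀ : MvPolynomial.eval
      (Sum.elim (fun ij : Fin n × Fin n => p₀.1 ij.1 ij.2)
        (fun ij : Fin n × Fin n => p₀.2 ij.1 ij.2)) P ≠ 0) :
    interior W = ∅ := by
  rw [Set.eq_empty_iff_forall_notMem]
  intro p hp
  set γ : ℂ → Matrix (Fin n) (Fin n) ℂ × Matrix (Fin n) (Fin n) ℂ :=
    fun t => (p.1 + t • (p₀.1 - p.1), p.2 + t • (p₀.2 - p.2)) with hγ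
  have hγ0 : γ 0 = p := by simp [hγ]
  have hγ1 : γ 1 = p₀ := by simp [hγ]
  have hcont : Continuous γ := by fun_prop
  have hU : γ ⁻¹' (interior W) ∈ nhds (0 : ℂ) := by
    apply hcont.continuousAt.preimage_mem_nhds
    rw [hγ0]
    exact (isOpen_interior).mem_nhds hp
  set g : Idx n → Polynomial ℂ := Sum.elim
    (fun ij => Polynomial.C (p.1 ij.1 ij.2) + Polynomial.X * Polynomial.C ((p₀.1 - p.1) ij.1 ij.2))
    (fun ij => Polynomial.C (p.2 ij.1 ij.2) + Polynomial.X * Polynomial.C ((p₀.2 - p.2) ij.1 ij.2))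
    with hg
  set q : Polynomial ℂ := MvPolynomial.eval₂ Polynomial.C g P with hq
  have heval : ∀ t : ℂ, q.eval t = MvPolynomial.eval
      (Sum.elim (fun ij : Fin n × Fin n => (γ t).1 ij.1 ij.2)
        (fun ij : Fin n × Fin n => (γ t).2 ij.1 ij.2)) P := by
    intro t
    have h1 : q.eval t = (Polynomial.evalRingHom t) (MvPolynomial.eval₂ Polynomial.C g P) := rfl
    rw [h1, MvPolynomial.eval₂_comp_left (Polynomial.evalRingHom t) Polynomial.C g P]
    have h2 : (Polynomial.evalRingHom t).comp (Polynomial.C : ℂ →+* Polynomial ℂ)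
        = RingHom.id ℂ := by
      ext x
      simp
    rw [h2]
    have h3 : ((Polynomial.evalRingHom t) ∘ g) = Sum.elim
        (fun ij : Fin n × Fin n => (γ t).1 ij.1 ij.2)
        (fun ij : Fin n × Fin n => (γ t).2 ij.1 ij.2) := by
      funext i
      rcases i with ij | ij
      · simp [hg, hγ, Matrix.add_apply, Matrix.smul_apply]
      · simp [hg, hγ, Matrix.add_apply, Matrix.smul_apply]
    rw [h3]
    rfl
  have hq0 : q = 0 := by
    apply Polynomial.eq_zero_of_infinite_isRoot
    apply Set.Infinite.mono (s := γ ⁻¹' (interior W))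
    · intro t ht
      have : γ t ∈ W := interior_subset ht
      show q.IsRoot t
      rw [Polynomial.IsRoot, heval t]
      exact hWP (γ t) this
    · exact infinite_of_mem_nhds (0 : ℂ) hU
  have := heval 1
  rw [hq0, hγ1] at this
  simp only [Polynomial.eval_zero] at this
  exact hp₀ this.symm

end

end CEP

open CEP in
theorem common_eigenvector_pairs_zariski_closed_proper {n : ℕ} (hn : 2 ≤ n) :
    let V : Set (Matrix (Fin n) (Fin n) ℂ × Matrix (Fin n) (Fin n) ℂ) :=
      {p | ∃ v : Fin n → ℂ, v ≠ 0 ∧ (∃ lam : ℂ, p.1 *ᵥ v = lam • v) ∧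
        (∃ mu : ℂ, p.2 *ᵥ v = mu • v)}
    (∃ (ι : Type) (f : ι → MvPolynomial ((Fin n × Fin n) ⊕ (Fin n × Fin n)) ℂ),
      V = {p | ∀ i : ι, MvPolynomial.eval
        (Sum.elim (fun ij => p.1 ij.1 ij.2) (fun ij => p.2 ij.1 ij.2)) (f i) = 0}) ∧
    V ≠ Set.univ ∧ interior V = ∅ := by
  intro V
  have hchar : V = {p | ∀ s : Fin n → ((Fin n × Fin n) × Fin n),
      MvPolynomial.eval (Sum.elim (fun ij => p.1 ij.1 ij.2) (fun ij => p.2 ij.1 ij.2))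
        (polyF n s) = 0} := by
    ext p
    simp only [Set.mem_setOf_eq]
    constructor
    · intro hmem s
      rw [eval_polyF p.1 p.2 s]
      exact (key_iff hn p.1 p.2).mp hmem s
    · intro h
      exact (key_iff hn p.1 p.2).mpr fun s => by rw [← eval_polyF p.1 p.2 s]; exact h s
  have hwit : (J n, (J n)ᵀ) ∉ V := by
    intro hmem
    exact no_common hn hmem
  refine ⟨⟨Fin n → ((Fin n × Fin n) × Fin n), polyF n, hchar⟩, ?_, ?_⟩
  · intro h
    exact hwit (h ▸ Set.mem_univ _)
  · have hnall : ¬ ∀ s : Fin n → ((Fin n × Fin n) × Fin n),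
        MvPolynomial.eval (Sum.elim (fun ij : Fin n × Fin n => (J n) ij.1 ij.2)
          (fun ij : Fin n × Fin n => (J n)ᵀ ij.1 ij.2)) (polyF n s) = 0 := by
      intro h
      apply hwit
      rw [hchar]
      exact h
    obtain ⟨s₀, hs₀⟩ := not_forall.mp hnall
    exact interior_empty_of_poly V (polyF n s₀)
      (fun p hp => by rw [hchar] at hp; exact hp s₀) (J n, (J n)ᵀ) hs₀
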